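/- arXiv:0810.4907 — 4 statements merged into one kernel-verified Lean document; each statement's English description precedes it below -/
import Mathlib

section
/- (Substitution step in the inductive proof.) Let f̃ ∈ K[x₁,…,x_n], b ∈ ℚⁿ, γ ∈ (ℂ*)ⁿ with f̃_b(γ) = 0, and suppose f̃_b(γ₁, x₂,…,x_n) is not identically zero as a polynomial in ℂ[x₂,…,x_n]. Define g̃(x₂,…,x_n) = f̃(γ₁ t^{b₁}, x₂,…,x_n) ∈ K[x₂,…,x_n]. Then the initial form of g̃ at b' = (b₂,…,b_n) satisfies g̃_{b'}(x') = f̃_b(γ₁, x'), hence g̃_{b'}(γ₂,…,γ_n) = 0, and b' ∈ 𝒯(g). -/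
noncomputable section

/-- The field of (generalized) Puiseux series over `ℂ`, modeled as Hahn series
with value group `ℚ` and coefficients in `ℂ`. -/
abbrev K : Type := HahnSeries ℚ ℂ

/-- The principal coefficient of a Puiseux series. -/
def pc (a : K) : ℂ := a.coeff a.order

/-- The weight of the multi-index `i` of `f` at the point `b`:
`o(a_i) + i·b`. -/
def wt {n : ℕ} (f : MvPolynomial (Fin n) K) (b : Fin n → ℚ) (i : Fin n →₀ ℕ) : ℚ :=
  (f.coeff i).order + ∑ j, (i j : ℚ) * b j

/-- The tropicalization `f(b) = min_{i ∈ supp f} (o(a_i) + i·b)`, with value `⊤`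
for the zero polynomial. -/
def trop {n : ℕ} (f : MvPolynomial (Fin n) K) (b : Fin n → ℚ) : WithTop ℚ :=
  f.support.inf fun i => (wt f b i : WithTop ℚ)

/-- The tropical hypersurface `𝒯(f)`: points where the minimum is attained at
least twice. -/
def tropSet {n : ℕ} (f : MvPolynomial (Fin n) K) : Set (Fin n → ℚ) :=
  {b | ∃ i ∈ f.support, ∃ j ∈ f.support, i ≠ j ∧
    (wt f b i : WithTop ℚ) = trop f b ∧ (wt f b j : WithTop ℚ) = trop f b}

/-- The initial form `f̃_b ∈ ℂ[x]` of `f` at `b`. -/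
def initForm {n : ℕ} (f : MvPolynomial (Fin n) K) (b : Fin n → ℚ) :
    MvPolynomial (Fin n) ℂ :=
  ∑ i ∈ f.support.filter fun i => (wt f b i : WithTop ℚ) = trop f b,
    MvPolynomial.monomial i (pc (f.coeff i))

/-- Substitution of a constant `c ∈ K` for the first variable. -/
def substFirst {n : ℕ} (f : MvPolynomial (Fin (n + 1)) K) (c : K) :
    MvPolynomial (Fin n) K :=
  Polynomial.eval (MvPolynomial.C c) (MvPolynomial.finSuccEquiv K n f)

/-- Substitution of a constant `c ∈ ℂ` for the first variable of a complex
polynomial. -/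
def substFirstC {n : ℕ} (p : MvPolynomial (Fin (n + 1)) ℂ) (c : ℂ) :
    MvPolynomial (Fin n) ℂ :=
  Polynomial.eval (MvPolynomial.C c) (MvPolynomial.finSuccEquiv ℂ n p)

/-! ### Auxiliary lemmas -/

open Classical in
/-- Coefficient of the initial form. -/
lemma coeff_initForm {n : ℕ} (f : MvPolynomial (Fin n) K) (b : Fin n → ℚ) (j : Fin n →₀ ℕ) :
    (initForm f b).coeff j =
      if f.coeff j ≠ 0 ∧ (wt f b j : WithTop ℚ) = trop f b then pc (f.coeff j) else 0 := by
  classical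
  rw [initForm, MvPolynomial.coeff_sum]
  simp only [MvPolynomial.coeff_monomial]
  rw [Finset.sum_ite_eq' _ j (fun i => pc (f.coeff i))]
  by_cases h : f.coeff j ≠ 0 ∧ (wt f b j : WithTop ℚ) = trop f b
  · rw [if_pos (Finset.mem_filter.mpr ⟨MvPolynomial.mem_support_iff.mpr h.1, h.2⟩), if_pos h]
  · rw [if_neg, if_neg h]
    intro hmem
    exact h ⟨MvPolynomial.mem_support_iff.mp (Finset.mem_filter.mp hmem).1,
      (Finset.mem_filter.mp hmem).2⟩

/-- Coefficient of the substitution of a constant for the first variable. -/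
lemma coeff_evalC {R : Type} [CommRing R] {n : ℕ} (p : MvPolynomial (Fin (n + 1)) R) (c : R)
    {N : ℕ} (hN : (MvPolynomial.finSuccEquiv R n p).natDegree < N) (m : Fin n →₀ ℕ) :
    MvPolynomial.coeff m (Polynomial.eval (MvPolynomial.C c) (MvPolynomial.finSuccEquiv R n p)) =
      ∑ k ∈ Finset.range N, MvPolynomial.coeff (m.cons k) p * c ^ k := by
  rw [Polynomial.eval_eq_sum_range' hN, MvPolynomial.coeff_sum]
  refine Finset.sum_congr rfl fun k _ => ?_
  rw [← map_pow, mul_comm, MvPolynomial.coeff_C_mul,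
    MvPolynomial.finSuccEquiv_coeff_coeff, mul_comm]

/-- Splitting of the weight of a cons multi-index. -/
lemma wt_cons {n : ℕ} (f : MvPolynomial (Fin (n + 1)) K) (b : Fin (n + 1) → ℚ) (k : ℕ)
    (m : Fin n →₀ ℕ) :
    wt f b (m.cons k) =
      (f.coeff (m.cons k)).order + (k : ℚ) * b 0 + ∑ j, (m j : ℚ) * b j.succ := by
  rw [wt, Fin.sum_univ_succ]
  simp only [Finsupp.cons_zero, Finsupp.cons_succ]
  ring

/-- Substitution step of the inductive proof: if `f̃_b(γ) = 0` but
`f̃_b(γ₁, x₂,…,xₙ)` is not identically zero, then for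
`g = f(γ₁ t^{b₁}, x₂,…,xₙ)` one has `g̃_{b'} = f̃_b(γ₁, ·)`, hence
`g̃_{b'}(γ₂,…,γₙ) = 0` and `b' ∈ 𝒯(g)`. -/
theorem substitution_step (n : ℕ) (f : MvPolynomial (Fin (n + 1)) K)
    (b : Fin (n + 1) → ℚ) (γ : Fin (n + 1) → ℂ) (hγ : ∀ j, γ j ≠ 0)
    (hroot : MvPolynomial.eval γ (initForm f b) = 0)
    (hne : substFirstC (initForm f b) (γ 0) ≠ 0) :
    initForm (substFirst f (HahnSeries.single (b 0) (γ 0))) (b ∘ Fin.succ) =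
        substFirstC (initForm f b) (γ 0) ∧
      MvPolynomial.eval (γ ∘ Fin.succ)
        (initForm (substFirst f (HahnSeries.single (b 0) (γ 0)))
          (b ∘ Fin.succ)) = 0 ∧
      (b ∘ Fin.succ) ∈ tropSet (substFirst f (HahnSeries.single (b 0) (γ 0))) := by
  classical
  set c : K := HahnSeries.single (b 0) (γ 0) with hc
  set F := initForm f b with hF
  set g := substFirst f c with hgdef
  set b' := b ∘ Fin.succ with hb'
  set G := substFirstC F (γ 0) with hGdef
  set P := MvPolynomial.finSuccEquiv K n f with hPdef
  set D := P.natDegree with hDdef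
  -- f ≠ 0
  have hf : f ≠ 0 := by
    rintro rfl
    apply hne
    simp [hGdef, hF, initForm, substFirstC]
  have hsupp : f.support.Nonempty := MvPolynomial.support_nonempty.mpr hf
  obtain ⟨i₀, hi₀, hT⟩ :=
    Finset.exists_mem_eq_inf f.support hsupp (fun i => (wt f b i : WithTop ℚ))
  set T := wt f b i₀ with hTdef
  have htrop : trop f b = (T : WithTop ℚ) := hT
  have hwtge : ∀ i ∈ f.support, T ≤ wt f b i := by
    intro i hi
    have h1 : trop f b ≤ (wt f b i : WithTop ℚ) :=
      Finset.inf_le (f := fun i => (wt f b i : WithTop ℚ)) hi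
    rw [htrop] at h1
    exact_mod_cast h1
  -- weight sums
  set Sm : (Fin n →₀ ℕ) → ℚ := fun m => ∑ j, (m j : ℚ) * b (Fin.succ j) with hSm
  have hwtg : ∀ m : Fin n →₀ ℕ, wt g b' m = (g.coeff m).order + Sm m := fun m => rfl
  -- degree bound for the initial form
  set Q := MvPolynomial.finSuccEquiv ℂ n F with hQdef
  have hQD : Q.natDegree ≤ D := by
    rw [Polynomial.natDegree_le_iff_coeff_eq_zero]
    intro N hN
    apply MvPolynomial.ext
    intro m
    rw [MvPolynomial.finSuccEquiv_coeff_coeff, hF, coeff_initForm, MvPolynomial.coeff_zero]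
    rw [if_neg]
    rintro ⟨h1, -⟩
    apply h1
    rw [← MvPolynomial.finSuccEquiv_coeff_coeff,
      Polynomial.coeff_eq_zero_of_natDegree_lt hN, MvPolynomial.coeff_zero]
  have hD1 : Q.natDegree < D + 1 := Nat.lt_succ_of_le hQD
  have hGcoeff : ∀ m : Fin n →₀ ℕ,
      G.coeff m = ∑ k ∈ Finset.range (D + 1), F.coeff (m.cons k) * γ 0 ^ k := by
    intro m
    rw [hGdef, substFirstC]
    exact coeff_evalC F (γ 0) hD1 m
  have hgq : ∀ (m : Fin n →₀ ℕ) (q : ℚ),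
      (g.coeff m).coeff q =
        ∑ k ∈ Finset.range (D + 1),
          (f.coeff (m.cons k)).coeff (q - (k : ℚ) * b 0) * γ 0 ^ k := by
    intro m q
    have h1 : g.coeff m = ∑ k ∈ Finset.range (D + 1), f.coeff (m.cons k) * c ^ k := by
      rw [hgdef, substFirst]
      exact coeff_evalC f c (Nat.lt_succ_self D) m
    have h2 : (∑ k ∈ Finset.range (D + 1), f.coeff (m.cons k) * c ^ k).coeff q
        = ∑ k ∈ Finset.range (D + 1), (f.coeff (m.cons k) * c ^ k).coeff q := by
      exact map_sum (HahnSeries.coeff.addMonoidHom q)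
        (fun k => f.coeff (m.cons k) * c ^ k) (Finset.range (D + 1))
    rw [h1, h2]
    refine Finset.sum_congr rfl fun k _ => ?_
    rw [hc, HahnSeries.single_pow, nsmul_eq_mul]
    have h3 := HahnSeries.coeff_mul_single_add (r := γ 0 ^ k) (x := f.coeff (m.cons k))
      (a := q - (k : ℚ) * b 0) (b := (k : ℚ) * b 0)
    rw [sub_add_cancel] at h3
    exact h3
  have hlow : ∀ (m : Fin n →₀ ℕ) (q : ℚ), q < T - Sm m → (g.coeff m).coeff q = 0 := by
    intro m q hq
    rw [hgq]
    refine Finset.sum_eq_zero fun k _ => ?_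
    by_cases ha : f.coeff (m.cons k) = 0
    · rw [ha]; simp
    · have h1 := hwtge _ (MvPolynomial.mem_support_iff.mpr ha)
      rw [wt_cons] at h1
      have hSmeq : Sm m = ∑ j, (m j : ℚ) * b j.succ := rfl
      have h2 : q - (k : ℚ) * b 0 < (f.coeff (m.cons k)).order := by
        rw [hSmeq] at hq; linarith
      rw [HahnSeries.coeff_eq_zero_of_lt_order h2, zero_mul]
  have hat : ∀ m : Fin n →₀ ℕ, (g.coeff m).coeff (T - Sm m) = G.coeff m := by
    intro m
    rw [hgq, hGcoeff]
    refine Finset.sum_congr rfl fun k _ => ?_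
    congr 1
    rw [hF, coeff_initForm]
    by_cases ha : f.coeff (m.cons k) = 0
    · rw [if_neg (fun h => h.1 ha), ha]; simp
    · have h1 := hwtge _ (MvPolynomial.mem_support_iff.mpr ha)
      have hwc := wt_cons f b k m
      have hSmeq : Sm m = ∑ j, (m j : ℚ) * b j.succ := rfl
      by_cases heq : wt f b (m.cons k) = T
      · rw [hwc] at heq
        have horder : T - Sm m - (k : ℚ) * b 0 = (f.coeff (m.cons k)).order := by
          rw [hSmeq]; linarith
        rw [if_pos ⟨ha, by rw [← hwc] at heq; rw [heq, htrop]⟩, pc, horder]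
      · have hlt : T < wt f b (m.cons k) := lt_of_le_of_ne h1 (Ne.symm heq)
        rw [hwc] at hlt
        have h2 : T - Sm m - (k : ℚ) * b 0 < (f.coeff (m.cons k)).order := by
          rw [hSmeq]; linarith
        rw [HahnSeries.coeff_eq_zero_of_lt_order h2, if_neg]
        rintro ⟨-, h3⟩
        rw [htrop] at h3
        exact heq (by exact_mod_cast h3)
  have horderpos : ∀ m : Fin n →₀ ℕ, G.coeff m ≠ 0 →
      g.coeff m ≠ 0 ∧ (g.coeff m).order = T - Sm m := by
    intro m hm
    have hc0 : (g.coeff m).coeff (T - Sm m) ≠ 0 := by rw [hat m]; exact hm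
    have hx : g.coeff m ≠ 0 := by
      intro h; apply hc0; rw [h]; simp
    refine ⟨hx, le_antisymm (HahnSeries.order_le_of_coeff_ne_zero hc0) ?_⟩
    by_contra hlt
    push_neg at hlt
    exact (mt HahnSeries.coeff_order_eq_zero.mp hx) (hlow m _ hlt)
  have horderneg : ∀ m : Fin n →₀ ℕ, g.coeff m ≠ 0 → G.coeff m = 0 →
      T - Sm m < (g.coeff m).order := by
    intro m hx hG0
    rcases lt_trichotomy ((g.coeff m).order) (T - Sm m) with h | h | h
    · exact absurd (hlow m _ h) ((mt HahnSeries.coeff_order_eq_zero.mp hx))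
    · exfalso
      have h2 := (mt HahnSeries.coeff_order_eq_zero.mp hx)
      rw [h, hat m] at h2
      exact h2 hG0
    · exact h
  obtain ⟨m₁, hm₁⟩ := MvPolynomial.ne_zero_iff.mp hne
  have hm₁' := horderpos m₁ hm₁
  have hm₁g : m₁ ∈ g.support := MvPolynomial.mem_support_iff.mpr hm₁'.1
  have hwtm₁ : wt g b' m₁ = T := by rw [hwtg, hm₁'.2]; ring
  have htropg : trop g b' = (T : WithTop ℚ) := by
    apply le_antisymm
    · rw [← hwtm₁]
      exact Finset.inf_le (f := fun i => (wt g b' i : WithTop ℚ)) hm₁g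
    · refine Finset.le_inf fun m hm => ?_
      have hx := MvPolynomial.mem_support_iff.mp hm
      by_cases hG0 : G.coeff m = 0
      · have h2 := horderneg m hx hG0
        have h3 : T ≤ wt g b' m := by rw [hwtg]; linarith
        exact_mod_cast h3
      · have h2 := (horderpos m hG0).2
        have h3 : wt g b' m = T := by rw [hwtg, h2]; ring
        rw [h3]
  have hmain : initForm g b' = G := by
    apply MvPolynomial.ext
    intro m
    rw [coeff_initForm]
    by_cases h : g.coeff m ≠ 0 ∧ (wt g b' m : WithTop ℚ) = trop g b'
    · rw [if_pos h]
      obtain ⟨hx, hwtm⟩ := h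
      rw [htropg] at hwtm
      have hwtm' : wt g b' m = T := by exact_mod_cast hwtm
      have horder : (g.coeff m).order = T - Sm m := by
        have h4 := hwtg m; linarith
      rw [pc, horder, hat m]
    · rw [if_neg h]
      by_contra hne2
      have hG0 : G.coeff m ≠ 0 := fun hh => hne2 hh.symm
      obtain ⟨hx, horder⟩ := horderpos m hG0
      apply h
      refine ⟨hx, ?_⟩
      have h5 : wt g b' m = T := by rw [hwtg, horder]; ring
      rw [htropg]
      exact_mod_cast h5
  have heval : MvPolynomial.eval (γ ∘ Fin.succ) G = 0 := by
    have hγdec : γ = Fin.cons (γ 0) (γ ∘ Fin.succ) := by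
      funext j
      refine Fin.cases ?_ ?_ j
      · simp
      · intro i; simp
    have h1 : MvPolynomial.eval γ F = 0 := hroot
    rw [hγdec, MvPolynomial.eval_eq_eval_mv_eval'] at h1
    rw [hGdef, substFirstC, ← hQdef]
    have h2 : MvPolynomial.eval (γ ∘ Fin.succ) (Polynomial.eval (MvPolynomial.C (γ 0)) Q)
        = Polynomial.eval (γ 0) (Polynomial.map (MvPolynomial.eval (γ ∘ Fin.succ)) Q) := by
      rw [Polynomial.eval_map]
      have h3 := Polynomial.eval₂_hom (p := Q) (MvPolynomial.eval (γ ∘ Fin.succ))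
        (MvPolynomial.C (γ 0))
      rw [MvPolynomial.eval_C] at h3
      exact h3.symm
    rw [h2]
    exact h1
  have heval2 : MvPolynomial.eval (γ ∘ Fin.succ) (initForm g b') = 0 := by
    rw [hmain]; exact heval
  obtain ⟨m₂, hm₂, hm₂ne⟩ : ∃ m₂, G.coeff m₂ ≠ 0 ∧ m₂ ≠ m₁ := by
    by_contra hcon
    push_neg at hcon
    have hGm : G = MvPolynomial.monomial m₁ (G.coeff m₁) := by
      apply MvPolynomial.ext; intro m
      rw [MvPolynomial.coeff_monomial]
      by_cases hmm : m = m₁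
      · subst hmm; rw [if_pos rfl]
      · rw [if_neg (fun hh => hmm hh.symm)]
        by_contra h0
        exact hmm (hcon m h0)
    have h6 := heval
    rw [hGm, MvPolynomial.eval_monomial] at h6
    rcases mul_eq_zero.mp h6 with h | h
    · exact hm₁ h
    · have hp : (m₁.prod fun i k => (γ ∘ Fin.succ) i ^ k) ≠ 0 := by
        rw [Finsupp.prod]
        exact Finset.prod_ne_zero_iff.mpr fun j _ => pow_ne_zero _ (hγ _)
      exact hp h
  have hm₂' := horderpos m₂ hm₂
  have hm₂g : m₂ ∈ g.support := MvPolynomial.mem_support_iff.mpr hm₂'.1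
  have hwtm₂ : wt g b' m₂ = T := by rw [hwtg, hm₂'.2]; ring
  exact ⟨hmain, heval2,
    ⟨m₁, hm₁g, m₂, hm₂g, Ne.symm hm₂ne, by rw [hwtm₁, htropg], by rw [hwtm₂, htropg]⟩⟩
end
end

section
/- (Perturbation step.) Let f̃ ∈ K[x₁,…,x_n] and b ∈ ℚⁿ, γ ∈ (ℂ*)ⁿ with f̃(x t^b) = f̃_b(x) t^{f(b)} + O(t^{f(b)+ε}) for some ε > 0. Suppose f̃_b factors as f̃_b = (x₁−γ₁)^k·(x₂−γ₂)⋯(x_n−γ_n)·q(x₁,…,x_n) with q(γ₁, x₂,…,x_n) not identically zero. Then for g̃(x₂,…,x_n) = f̃((γ₁ + t^{ε/(2k)}) t^{b₁}, x₂,…,x_n), the initial form of g̃ at b' = (b₂,…,b_n) equals (x₂−γ₂)⋯(x_n−γ_n)·q(γ₁, x₂,…,x_n) up to a nonzero constant; in particular g̃_{b'}(γ₂,…,γ_n) = 0 and b' ∈ 𝒯(g). -/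
set_option maxHeartbeats 1000000


noncomputable section

/-- The result of substituting `x_j ↦ x_j t^{b_j}` in `f`. -/
def substT {n : ℕ} (f : MvPolynomial (Fin n) K) (b : Fin n → ℚ) :
    MvPolynomial (Fin n) K :=
  MvPolynomial.aeval
    (fun j => MvPolynomial.X j * MvPolynomial.C (HahnSeries.single (b j) 1)) f

namespace Helper
open MvPolynomial HahnSeries


/-- orderTop of a sum. -/
lemma ot_add {w : WithTop ℚ} {x y : K} (hx : w ≤ x.orderTop) (hy : w ≤ y.orderTop) :
    w ≤ (x + y).orderTop :=
  le_trans (le_min hx hy) min_orderTop_le_orderTop_add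

lemma ot_mul {w1 w2 : WithTop ℚ} {x y : K} (hx : w1 ≤ x.orderTop) (hy : w2 ≤ y.orderTop) :
    w1 + w2 ≤ (x * y).orderTop :=
  le_trans (add_le_add hx hy) orderTop_add_le_mul

lemma ot_sum {w : WithTop ℚ} {ι : Type*} (s : Finset ι) (F : ι → K)
    (h : ∀ i ∈ s, w ≤ (F i).orderTop) : w ≤ (∑ i ∈ s, F i).orderTop := by
  classical
  induction s using Finset.induction_on with
  | empty => simp
  | @insert a s hx ih =>
    rw [Finset.sum_insert hx]
    exact ot_add (h a (Finset.mem_insert_self a s))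
      (ih fun i hi => h i (Finset.mem_insert_of_mem hi))

lemma ot_pow {x : K} (hx : (0 : WithTop ℚ) ≤ x.orderTop) (m : ℕ) :
    (0 : WithTop ℚ) ≤ (x ^ m).orderTop := by
  induction m with
  | zero => simp [orderTop_one]
  | succ m ih => rw [pow_succ]; simpa using ot_mul ih hx

/-- binomial estimate: `u^m - a^m` has orderTop ≥ δ if `u - a` does. -/
lemma ot_pow_sub_pow {u a : K} {δ : WithTop ℚ}
    (hu : (0 : WithTop ℚ) ≤ u.orderTop) (ha : (0 : WithTop ℚ) ≤ a.orderTop)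
    (h : δ ≤ (u - a).orderTop) (hδ : 0 ≤ δ) (m : ℕ) :
    δ ≤ (u ^ m - a ^ m).orderTop := by
  induction m with
  | zero => simp [hδ]
  | succ m ih =>
    have : u ^ (m+1) - a ^ (m+1) = u * (u ^ m - a ^ m) + (u - a) * a ^ m := by ring
    rw [this]
    refine ot_add ?_ ?_
    · simpa using ot_mul hu ih
    · simpa using ot_mul h (ot_pow ha m)

/-- key decomposition lemma -/
lemma decomp {x : K} {W δ : ℚ} {c : ℂ} (hδ : 0 < δ)
    (h : ((W + δ : ℚ) : WithTop ℚ) ≤ (x - HahnSeries.single W c).orderTop) :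
    (c ≠ 0 → x ≠ 0 ∧ x.order = W ∧ x.coeff W = c) ∧
    (c = 0 → ((W : WithTop ℚ) < x.orderTop)) := by
  have hWlt : ((W : WithTop ℚ)) < ((W + δ : ℚ) : WithTop ℚ) := by
    exact_mod_cast lt_add_of_pos_right W hδ
  constructor
  · intro hc
    have hcoeff : x.coeff W = c := by
      have h0 : (x - HahnSeries.single W c).coeff W = 0 :=
        coeff_eq_zero_of_lt_orderTop (lt_of_lt_of_le hWlt h)
      have h1 : x.coeff W - c = 0 := by
        simpa [HahnSeries.coeff_sub, HahnSeries.coeff_single_same] using h0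
      exact sub_eq_zero.mp h1
    have hx0 : x ≠ 0 := fun h0 => hc (by simp [h0] at hcoeff; exact hcoeff.symm)
    refine ⟨hx0, ?_, hcoeff⟩
    have hle : x.order ≤ W := order_le_of_coeff_ne_zero (hcoeff ▸ hc)
    rcases lt_or_eq_of_le hle with hlt | heq
    · exfalso
      apply leadingCoeff_ne_zero.mpr hx0; rw [leadingCoeff_eq]
      have h1 : (HahnSeries.single W c).coeff x.order = 0 :=
        HahnSeries.coeff_single_of_ne (ne_of_lt hlt)
      have h2 : (x - HahnSeries.single W c).coeff x.order = 0 := by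
        refine coeff_eq_zero_of_lt_orderTop (lt_of_lt_of_le ?_ h)
        exact_mod_cast lt_trans hlt (lt_add_of_pos_right W hδ)
      have := coeff_sub (x := x) (y := HahnSeries.single W c) (a := x.order)
      rw [h1, sub_zero] at this
      rw [← this, h2]
    · exact heq
  · intro hc
    subst hc
    simpa using lt_of_lt_of_le hWlt h


/-- Substitution of a constant for the first variable, as an algebra hom. -/
def sFirst {R : Type*} [CommSemiring R] {n : ℕ} (c : R) :
    MvPolynomial (Fin (n + 1)) R →ₐ[R] MvPolynomial (Fin n) R :=
  aeval (Fin.cases (C c) X)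

@[simp] lemma sFirst_X_zero {R : Type*} [CommSemiring R] {n : ℕ} (c : R) :
    sFirst (n := n) c (X 0) = C c := by simp [sFirst]

@[simp] lemma sFirst_X_succ {R : Type*} [CommSemiring R] {n : ℕ} (c : R) (j : Fin n) :
    sFirst c (X j.succ) = X j := by
  simp [sFirst]

@[simp] lemma sFirst_C {R : Type*} [CommSemiring R] {n : ℕ} (c a : R) :
    sFirst (n := n) c (C a) = C a := by simp [sFirst, algebraMap_eq]

lemma substFirst_eq {n : ℕ} (f : MvPolynomial (Fin (n + 1)) K) (c : K) :
    substFirst f c = sFirst c f := by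
  induction f using MvPolynomial.induction_on with
  | C a => simp [substFirst, finSuccEquiv_apply]
  | add p q hp hq =>
    simp only [substFirst, map_add, Polynomial.eval_add] at *; rw [hp, hq, ← map_add]
  | mul_X p i hp =>
    rw [substFirst, map_mul, Polynomial.eval_mul, ← substFirst, hp, map_mul]
    refine congrArg (fun z => (sFirst c) p * z) ?_
    induction i using Fin.cases with
    | zero => simp [finSuccEquiv_X_zero]
    | succ j => simp [finSuccEquiv_X_succ]

lemma substFirstC_eq {n : ℕ} (p : MvPolynomial (Fin (n + 1)) ℂ) (c : ℂ) :
    substFirstC p c = sFirst c p := by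
  induction p using MvPolynomial.induction_on with
  | C a => simp [substFirstC, finSuccEquiv_apply]
  | add p q hp hq =>
    simp only [substFirstC, map_add, Polynomial.eval_add] at *; rw [hp, hq, ← map_add]
  | mul_X p i hp =>
    rw [substFirstC, map_mul, Polynomial.eval_mul, ← substFirstC, hp, map_mul]
    congr 1
    induction i using Fin.cases with
    | zero => simp [finSuccEquiv_X_zero]
    | succ j => simp [finSuccEquiv_X_succ]

lemma sFirst_monomial {R : Type*} [CommSemiring R] {n : ℕ} (c : R)
    (j : Fin (n + 1) →₀ ℕ) (a : R) :
    sFirst c (monomial j a) = monomial (Finsupp.tail j) (a * c ^ (j 0)) := by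
  rw [sFirst, aeval_monomial, algebraMap_eq]
  rw [Finsupp.prod_fintype _ _ (fun i => pow_zero _)]
  rw [Fin.prod_univ_succ]
  rw [monomial_eq, Finsupp.prod_fintype _ _ (fun i => pow_zero _)]
  simp only [Fin.cases_zero, Fin.cases_succ, Finsupp.tail_apply, map_mul, map_pow]
  ring

/-- `sFirst` of a polynomial, as a sum of monomials. -/
lemma sFirst_eq_sum {R : Type*} [CommSemiring R] {n : ℕ} (c : R)
    (p : MvPolynomial (Fin (n + 1)) R) :
    sFirst c p = ∑ j ∈ p.support, monomial (Finsupp.tail j) (p.coeff j * c ^ (j 0)) := by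
  conv_lhs => rw [p.as_sum, map_sum]
  exact Finset.sum_congr rfl fun j _ => sFirst_monomial c j (p.coeff j)

/-- product of Hahn `single`s with coefficient 1 -/
lemma prod_single {ι : Type*} (s : Finset ι) (r : ι → ℚ) :
    ∏ l ∈ s, (HahnSeries.single (r l) 1 : K) = HahnSeries.single (∑ l ∈ s, r l) 1 := by
  classical
  induction s using Finset.induction_on with
  | empty => simp [HahnSeries.single_zero_one]
  | @insert a s hx ih =>
    rw [Finset.prod_insert hx, Finset.sum_insert hx, ih, HahnSeries.single_mul_single, mul_one]

lemma substT_monomial {n : ℕ} (b : Fin n → ℚ) (j : Fin n →₀ ℕ) (a : K) :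
    MvPolynomial.aeval
      (fun l => (X l : MvPolynomial (Fin n) K) * MvPolynomial.C (HahnSeries.single (b l) 1))
      (monomial j a) =
      monomial j (a * HahnSeries.single (∑ l, (j l : ℚ) * b l) 1) := by
  rw [aeval_monomial, algebraMap_eq]
  rw [Finsupp.prod_fintype _ _ (fun i => pow_zero _)]
  have h1 : ∀ l, ((X l : MvPolynomial (Fin n) K) * MvPolynomial.C (HahnSeries.single (b l) 1)) ^ j l
      = X l ^ j l * MvPolynomial.C (HahnSeries.single ((j l : ℚ) * b l) 1) := by
    intro l
    rw [mul_pow, ← map_pow, HahnSeries.single_pow, one_pow, nsmul_eq_mul]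
  simp_rw [h1]
  rw [Finset.prod_mul_distrib, ← map_prod, prod_single]
  rw [monomial_eq, Finsupp.prod_fintype _ _ (fun i => pow_zero _), map_mul]
  ring

lemma substT_eq_sum {n : ℕ} (f : MvPolynomial (Fin n) K) (b : Fin n → ℚ) :
    substT f b = ∑ j ∈ f.support,
      monomial j (f.coeff j * HahnSeries.single (∑ l, (j l : ℚ) * b l) 1) := by
  rw [substT]
  conv_lhs => rw [f.as_sum, map_sum]
  exact Finset.sum_congr rfl fun j _ => substT_monomial b j (f.coeff j)

lemma substT_coeff {n : ℕ} (f : MvPolynomial (Fin n) K) (b : Fin n → ℚ) (i : Fin n →₀ ℕ) :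
    (substT f b).coeff i = f.coeff i * HahnSeries.single (∑ l, (i l : ℚ) * b l) 1 := by
  rw [substT_eq_sum]
  rw [MvPolynomial.coeff_sum]
  simp_rw [coeff_monomial]
  by_cases hi : i ∈ f.support
  · rw [Finset.sum_eq_single i (fun j _ hj => by rw [if_neg hj]) (fun h => (h hi).elim), if_pos rfl]
  · rw [Finset.sum_eq_zero, MvPolynomial.notMem_support_iff.mp hi, zero_mul]
    intro j hj
    rw [if_neg]
    rintro rfl
    exact hi hj



lemma substT_substFirst {n : ℕ} (f : MvPolynomial (Fin (n + 1)) K) (b : Fin (n + 1) → ℚ)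
    (u : K) :
    substT (sFirst (u * HahnSeries.single (b 0) 1) f) (b ∘ Fin.succ) = sFirst u (substT f b) := by
  rw [substT, substT, sFirst, sFirst, comp_aeval_apply, comp_aeval_apply]
  have h : ∀ i : Fin (n + 1),
      (aeval fun j => (X j : MvPolynomial (Fin n) K) *
        MvPolynomial.C (HahnSeries.single ((b ∘ Fin.succ) j) 1))
        (Fin.cases (MvPolynomial.C (u * HahnSeries.single (b 0) 1)) X i) =
      (aeval (Fin.cases (MvPolynomial.C u) X))
        ((X i : MvPolynomial (Fin (n + 1)) K) *
          MvPolynomial.C (HahnSeries.single (b i) 1)) := by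
    intro i
    induction i using Fin.cases with
    | zero => simp [algebraMap_eq]
    | succ j => simp [algebraMap_eq, Function.comp]
  exact congrArg (fun s => (aeval s : MvPolynomial (Fin (n + 1)) K →ₐ[K] _) f)
    (funext h)

/-- coefficientwise orderTop bound for products -/
lemma coeff_mul_ot {m : ℕ} {P Q : MvPolynomial (Fin m) K} {w1 w2 : WithTop ℚ}
    (hP : ∀ i, w1 ≤ (P.coeff i).orderTop) (hQ : ∀ i, w2 ≤ (Q.coeff i).orderTop) :
    ∀ i, w1 + w2 ≤ ((P * Q).coeff i).orderTop := by
  intro i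
  rw [MvPolynomial.coeff_mul]
  exact ot_sum _ _ fun x _ => ot_mul (hP x.1) (hQ x.2)

/-- coefficientwise orderTop bound for `sFirst` -/
lemma coeff_sFirst_ot {n : ℕ} {u : K} (hu : (0 : WithTop ℚ) ≤ u.orderTop)
    {p : MvPolynomial (Fin (n + 1)) K} {w : WithTop ℚ}
    (hp : ∀ j, w ≤ (p.coeff j).orderTop) :
    ∀ i, w ≤ ((sFirst u p).coeff i).orderTop := by
  intro i
  rw [sFirst_eq_sum, MvPolynomial.coeff_sum]
  refine ot_sum _ _ fun j _ => ?_
  rw [coeff_monomial]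
  split_ifs with h
  · simpa using ot_mul (hp j) (ot_pow hu (j 0))
  · simp

lemma coeff_C_single_mul_map {m : ℕ} (v : ℚ) (P : MvPolynomial (Fin m) ℂ) (i : Fin m →₀ ℕ) :
    ((MvPolynomial.C (HahnSeries.single v 1) *
      MvPolynomial.map (HahnSeries.C : ℂ →+* K) P).coeff i) =
      HahnSeries.single v (P.coeff i) := by
  rw [MvPolynomial.coeff_C_mul, MvPolynomial.coeff_map, HahnSeries.C_apply,
    HahnSeries.single_mul_single, add_zero, one_mul]

lemma coeff_map_ot {m : ℕ} (P : MvPolynomial (Fin m) ℂ) (i : Fin m →₀ ℕ) :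
    (0 : WithTop ℚ) ≤ ((MvPolynomial.map (HahnSeries.C : ℂ →+* K) P).coeff i).orderTop := by
  rw [MvPolynomial.coeff_map, HahnSeries.C_apply]
  exact_mod_cast HahnSeries.orderTop_single_le

lemma coeff_C_single_ot {m : ℕ} (v : ℚ) (i : Fin m →₀ ℕ) :
    (v : WithTop ℚ) ≤ (((MvPolynomial.C (HahnSeries.single v 1) :
      MvPolynomial (Fin m) K)).coeff i).orderTop := by
  rw [MvPolynomial.coeff_C]
  split_ifs
  · exact HahnSeries.orderTop_single_le
  · simp

/-- the q-part estimate -/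
lemma q_part {n : ℕ} (p : MvPolynomial (Fin (n + 1)) ℂ) (γ0 : ℂ) {u : K} {δ : ℚ}
    (hδ : 0 ≤ δ) (hu : (0 : WithTop ℚ) ≤ u.orderTop)
    (hud : (δ : WithTop ℚ) ≤ (u - HahnSeries.C γ0).orderTop) :
    ∀ i, (δ : WithTop ℚ) ≤
      ((sFirst u (MvPolynomial.map (HahnSeries.C : ℂ →+* K) p)
        - MvPolynomial.map (HahnSeries.C : ℂ →+* K) (sFirst γ0 p)).coeff i).orderTop := by
  intro i
  have hsupp : (MvPolynomial.map (HahnSeries.C : ℂ →+* K) p).support = p.support :=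
    MvPolynomial.support_map_of_injective _ HahnSeries.C_injective
  have hA : (sFirst u (MvPolynomial.map (HahnSeries.C : ℂ →+* K) p)).coeff i =
      ∑ j ∈ p.support, (if Finsupp.tail j = i
        then (HahnSeries.C (p.coeff j) : K) * u ^ (j 0) else 0) := by
    rw [sFirst_eq_sum, hsupp, MvPolynomial.coeff_sum]
    simp_rw [MvPolynomial.coeff_map, coeff_monomial]
  have hB : ((MvPolynomial.map (HahnSeries.C : ℂ →+* K) (sFirst γ0 p)).coeff i) =
      ∑ j ∈ p.support, (if Finsupp.tail j = i
        then (HahnSeries.C (p.coeff j) : K) * (HahnSeries.C γ0 : K) ^ (j 0) else 0) := by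
    rw [sFirst_eq_sum, map_sum, MvPolynomial.coeff_sum]
    simp_rw [MvPolynomial.map_monomial, map_mul, map_pow, coeff_monomial]
  rw [MvPolynomial.coeff_sub, hA, hB, ← Finset.sum_sub_distrib]
  refine ot_sum _ _ fun j _ => ?_
  split_ifs with h
  · rw [← mul_sub]
    simpa using ot_mul (x := (HahnSeries.C (p.coeff j) : K))
      (w1 := (0 : WithTop ℚ))
      (by rw [HahnSeries.C_apply]; exact_mod_cast HahnSeries.orderTop_single_le)
      (ot_pow_sub_pow hu
        (by rw [HahnSeries.C_apply]; exact_mod_cast HahnSeries.orderTop_single_le)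
        hud (by exact_mod_cast hδ) (j 0))
  · rw [sub_zero]
    simp

end Helper

open MvPolynomial in
/-- Perturbation step of the inductive proof: given
`f(xt^b) = f̃_b·t^{f(b)} + O(t^{f(b)+ε})` and a factorization
`f̃_b = (x₁−γ₁)^k·(x₂−γ₂)⋯(xₙ−γₙ)·q` with `q(γ₁,·) ≠ 0`, the polynomial
`g = f((γ₁ + t^{ε/2k}) t^{b₁}, x₂,…,xₙ)` has initial form at `b' = (b₂,…,bₙ)`
equal to `(x₂−γ₂)⋯(xₙ−γₙ)·q(γ₁,·)` up to a nonzero constant; in particular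
`g̃_{b'}(γ₂,…,γₙ) = 0` and `b' ∈ 𝒯(g)`. -/
theorem perturbation_step (n : ℕ) (hn : 0 < n)
    (f : MvPolynomial (Fin (n + 1)) K) (hf : f ≠ 0)
    (b : Fin (n + 1) → ℚ) (γ : Fin (n + 1) → ℂ) (hγ : ∀ j, γ j ≠ 0)
    (v : ℚ) (hv : (v : WithTop ℚ) = trop f b) (ε : ℚ) (hε : 0 < ε)
    (hO : ∀ i : Fin (n + 1) →₀ ℕ,
      (((v + ε : ℚ) : WithTop ℚ)) ≤
        ((substT f b).coeff i -
          HahnSeries.single v ((initForm f b).coeff i)).orderTop)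
    (k : ℕ) (hk : 0 < k) (q : MvPolynomial (Fin (n + 1)) ℂ)
    (hfact : initForm f b =
      (X 0 - C (γ 0)) ^ k *
        (∏ j : Fin n, (X j.succ - C (γ j.succ))) * q)
    (hq : substFirstC q (γ 0) ≠ 0) :
    ∀ g : MvPolynomial (Fin n) K,
      g = substFirst f
        ((HahnSeries.single (0 : ℚ) (γ 0) +
            HahnSeries.single (ε / (2 * k) : ℚ) 1) *
          HahnSeries.single (b 0) 1) →
      (∃ c₀ : ℂ, c₀ ≠ 0 ∧
          initForm g (b ∘ Fin.succ) =
            C c₀ * (∏ j : Fin n, (X j - C (γ j.succ))) *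
              substFirstC q (γ 0)) ∧
        MvPolynomial.eval (γ ∘ Fin.succ) (initForm g (b ∘ Fin.succ)) = 0 ∧
        (b ∘ Fin.succ) ∈ tropSet g := by
  classical
  intro g hg
  open Helper in
  set δ : ℚ := ε / (2 * k) with hδdef
  have hk1 : (1 : ℚ) ≤ (k : ℚ) := by exact_mod_cast hk
  have hδpos : 0 < δ := by positivity
  have hδle : δ ≤ ε / 2 := by
    rw [hδdef, div_le_div_iff₀ (by positivity) (by norm_num)]
    nlinarith
  have hkδ : (k : ℚ) * δ = ε / 2 := by
    rw [hδdef]; field_simp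
  set u : K := HahnSeries.single (0 : ℚ) (γ 0) + HahnSeries.single δ 1 with hudef
  set W : ℚ := v + ε / 2 with hWdef
  set b' : Fin n → ℚ := b ∘ Fin.succ with hb'def
  set Cℍ : ℂ →+* K := HahnSeries.C with hCdef
  set q' : MvPolynomial (Fin n) ℂ := substFirstC q (γ 0) with hq'def
  set B' : MvPolynomial (Fin n) ℂ := ∏ j : Fin n, (X j - C (γ j.succ)) with hB'def
  set M : MvPolynomial (Fin n) ℂ := B' * q' with hMdef
  -- facts about u
  have hu0 : u - Cℍ (γ 0) = HahnSeries.single δ 1 := by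
    rw [hudef, hCdef, HahnSeries.C_apply]; abel
  have huot : (0 : WithTop ℚ) ≤ u.orderTop := by
    rw [hudef]
    exact ot_add (le_trans (by norm_num) HahnSeries.orderTop_single_le)
      (le_trans (by exact_mod_cast hδpos.le) HahnSeries.orderTop_single_le)
  -- commuting substitution
  have hgsub : substT g b' = sFirst u (substT f b) := by
    rw [hg, substFirst_eq, hb'def, ← substT_substFirst]
  -- decomposition of substT f b
  set IF : MvPolynomial (Fin (n + 1)) ℂ := initForm f b with hIFdef
  set Err : MvPolynomial (Fin (n + 1)) K :=
    substT f b - MvPolynomial.C (HahnSeries.single v 1) * MvPolynomial.map Cℍ IF with hErrdef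
  have hErrot : ∀ i, (((v + ε : ℚ)) : WithTop ℚ) ≤ (Err.coeff i).orderTop := by
    intro i
    rw [hErrdef, MvPolynomial.coeff_sub, hCdef, coeff_C_single_mul_map]
    exact hO i
  have hsum : substT f b
      = MvPolynomial.C (HahnSeries.single v 1) * MvPolynomial.map Cℍ IF + Err := by
    rw [hErrdef]; ring
  have hsplit : substT g b' =
      MvPolynomial.C (HahnSeries.single v 1) * sFirst u (MvPolynomial.map Cℍ IF)
        + sFirst u Err := by
    rw [hgsub, hsum, map_add, map_mul, sFirst_C]
  -- the initial-form part
  have hfac1 : sFirst u (MvPolynomial.map Cℍ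
        (((X 0 - C (γ 0) : MvPolynomial (Fin (n + 1)) ℂ)) ^ k))
      = (MvPolynomial.C (HahnSeries.single (ε / 2 : ℚ) 1) : MvPolynomial (Fin n) K) := by
    rw [map_pow, map_pow, map_sub, MvPolynomial.map_X, MvPolynomial.map_C,
      map_sub, sFirst_X_zero, sFirst_C, ← map_sub, hu0, ← map_pow,
      HahnSeries.single_pow, one_pow, nsmul_eq_mul, hkδ]
  have hfac2 : sFirst u (MvPolynomial.map Cℍ (∏ j : Fin n, (X j.succ - C (γ j.succ))))
      = MvPolynomial.map Cℍ B' := by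
    rw [map_prod, map_prod, hB'def, map_prod]
    refine Finset.prod_congr rfl fun j _ => ?_
    rw [map_sub, MvPolynomial.map_X, MvPolynomial.map_C, map_sub, sFirst_X_succ, sFirst_C,
      map_sub, MvPolynomial.map_X, MvPolynomial.map_C]
  -- the q part
  set R : MvPolynomial (Fin n) K :=
    sFirst u (MvPolynomial.map Cℍ q) - MvPolynomial.map Cℍ q' with hRdef
  have hRot : ∀ i, ((δ : ℚ) : WithTop ℚ) ≤ (R.coeff i).orderTop := by
    have h := q_part q (γ 0) hδpos.le huot
      (by rw [← hCdef, hu0]; exact HahnSeries.orderTop_single_le)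
    intro i
    rw [hRdef, hq'def, substFirstC_eq, hCdef]
    exact h i
  -- main decomposition
  set D : MvPolynomial (Fin n) K :=
    MvPolynomial.C (HahnSeries.single W 1) * (MvPolynomial.map Cℍ B' * R)
      + sFirst u Err with hDdef
  have hCC : MvPolynomial.C (HahnSeries.single v 1) *
      MvPolynomial.C (HahnSeries.single (ε / 2 : ℚ) (1 : ℂ)) =
      (MvPolynomial.C (HahnSeries.single W 1) : MvPolynomial (Fin n) K) := by
    rw [← map_mul, HahnSeries.single_mul_single, one_mul, hWdef]
  have hmain : substT g b'
      = MvPolynomial.C (HahnSeries.single W 1) * MvPolynomial.map Cℍ M + D := by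
    rw [hsplit, hfact, map_mul, map_mul, map_mul, map_mul, hfac1, hfac2]
    rw [hMdef, map_mul, hDdef]
    have hqdecomp : sFirst u (MvPolynomial.map Cℍ q) = MvPolynomial.map Cℍ q' + R := by
      rw [hRdef]; ring
    rw [hqdecomp, ← hCC]
    ring
  -- main coefficient estimate
  have hDot : ∀ i, (((W + δ : ℚ)) : WithTop ℚ) ≤ (D.coeff i).orderTop := by
    intro i
    rw [hDdef, MvPolynomial.coeff_add]
    refine ot_add ?_ ?_
    · have h1 := coeff_mul_ot (coeff_C_single_ot W)
        (coeff_mul_ot (fun j => coeff_map_ot B' j) hRot) i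
      refine le_trans (le_of_eq ?_) h1
      rw [zero_add, ← WithTop.coe_add]
    · have h2 := coeff_sFirst_ot huot hErrot i
      refine le_trans ?_ h2
      refine WithTop.coe_le_coe.mpr ?_
      rw [hWdef]; linarith
  have hEst : ∀ i, (((W + δ : ℚ)) : WithTop ℚ) ≤
      ((substT g b').coeff i - HahnSeries.single W (M.coeff i)).orderTop := by
    intro i
    have hc : (substT g b').coeff i - HahnSeries.single W (M.coeff i) = D.coeff i := by
      rw [hmain, MvPolynomial.coeff_add, hCdef, coeff_C_single_mul_map]
      ring
    rw [hc]; exact hDot i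
  -- per-index consequences
  have hwt : ∀ i : Fin n →₀ ℕ, wt g b' i = (g.coeff i).order + ∑ l, (i l : ℚ) * b' l := by
    intro i; rfl
  have hMne : ∀ i : Fin n →₀ ℕ, M.coeff i ≠ 0 →
      g.coeff i ≠ 0 ∧ wt g b' i = W ∧ pc (g.coeff i) = M.coeff i := by
    intro i hMi
    obtain ⟨hx0, hord, hcoeff⟩ := (decomp hδpos (hEst i)).1 hMi
    rw [substT_coeff] at hx0 hord hcoeff
    have hg0 : g.coeff i ≠ 0 := fun h => hx0 (by rw [h, zero_mul])
    have hs0 : (HahnSeries.single (∑ l, (i l : ℚ) * b' l) 1 : K) ≠ 0 :=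
      HahnSeries.single_ne_zero one_ne_zero
    have horder : (g.coeff i).order + ∑ l, (i l : ℚ) * b' l = W := by
      rw [← HahnSeries.order_single (one_ne_zero (α := ℂ)) (a := ∑ l, (i l : ℚ) * b' l),
        ← HahnSeries.order_mul hg0 hs0]
      exact hord
    refine ⟨hg0, by rw [hwt i, horder], ?_⟩
    have hcoW := HahnSeries.coeff_mul_order_add_order (g.coeff i)
      (HahnSeries.single (∑ l, (i l : ℚ) * b' l) 1)
    rw [HahnSeries.order_single (one_ne_zero (α := ℂ)), horder, hcoeff,
      HahnSeries.leadingCoeff_of_single, mul_one] at hcoW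
    rw [hcoW]
    simp only [pc]
    rw [HahnSeries.leadingCoeff_eq]
  have hM0 : ∀ i : Fin n →₀ ℕ, M.coeff i = 0 → g.coeff i ≠ 0 → (W : ℚ) < wt g b' i := by
    intro i h0 hgi
    have h2 := (decomp hδpos (hEst i)).2 h0
    rw [substT_coeff] at h2
    have hs0 : (HahnSeries.single (∑ l, (i l : ℚ) * b' l) 1 : K) ≠ 0 :=
      HahnSeries.single_ne_zero one_ne_zero
    have hx0 : g.coeff i * HahnSeries.single (∑ l, (i l : ℚ) * b' l) 1 ≠ 0 :=
      mul_ne_zero hgi hs0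
    rw [← HahnSeries.order_eq_orderTop_of_ne_zero hx0] at h2
    have h3 : (W : ℚ) <
        (g.coeff i * HahnSeries.single (∑ l, (i l : ℚ) * b' l) 1).order := by
      exact_mod_cast h2
    rw [HahnSeries.order_mul hgi hs0, HahnSeries.order_single (one_ne_zero (α := ℂ))] at h3
    rw [hwt i]
    exact h3
  -- M is nonzero
  have hB'ne : B' ≠ 0 := by
    rw [hB'def]
    refine Finset.prod_ne_zero_iff.mpr fun j _ => ?_
    intro h
    have := congrArg (MvPolynomial.coeff (Finsupp.single j 1)) h
    simp [MvPolynomial.coeff_X, MvPolynomial.coeff_C, eq_comm,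
      Finsupp.single_eq_zero] at this
  have hMne0 : M ≠ 0 := mul_ne_zero hB'ne hq
  obtain ⟨i0, hi0⟩ := MvPolynomial.support_nonempty.mpr hMne0
  have hi0c : M.coeff i0 ≠ 0 := MvPolynomial.mem_support_iff.mp hi0
  -- tropicalization of g
  have htrop : trop g b' = (W : WithTop ℚ) := by
    apply le_antisymm
    · have hmem : i0 ∈ g.support :=
        MvPolynomial.mem_support_iff.mpr (hMne i0 hi0c).1
      have h5 : trop g b' ≤ ((wt g b' i0 : ℚ) : WithTop ℚ) := Finset.inf_le hmem
      rwa [(hMne i0 hi0c).2.1] at h5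
    · refine Finset.le_inf fun i hi => ?_
      by_cases hMi : M.coeff i = 0
      · exact_mod_cast (hM0 i hMi (MvPolynomial.mem_support_iff.mp hi)).le
      · exact le_of_eq (by exact_mod_cast ((hMne i hMi).2.1).symm)
  -- the initial form of g
  have hinit : initForm g b' = M := by
    rw [initForm]
    have hfilter : (g.support.filter fun i => ((wt g b' i : WithTop ℚ) = trop g b'))
        = M.support := by
      ext i
      simp only [Finset.mem_filter, MvPolynomial.mem_support_iff, htrop]
      constructor
      · rintro ⟨hgi, hwti⟩
        intro hMi
        have hlt := hM0 i hMi hgi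
        have : wt g b' i = W := by exact_mod_cast hwti
        rw [this] at hlt
        exact lt_irrefl _ hlt
      · intro hMi
        exact ⟨(hMne i hMi).1, by exact_mod_cast (hMne i hMi).2.1⟩
    rw [hfilter]
    conv_rhs => rw [← MvPolynomial.support_sum_monomial_coeff M]
    refine Finset.sum_congr rfl fun i hi => ?_
    rw [(hMne i (MvPolynomial.mem_support_iff.mp hi)).2.2]
  -- evaluation of M at γ' is zero
  have heval : MvPolynomial.eval (γ ∘ Fin.succ) M = 0 := by
    rw [hMdef, map_mul, hB'def, map_prod]
    have hzero : MvPolynomial.eval (γ ∘ Fin.succ) (X (⟨0, hn⟩ : Fin n)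
        - C (γ (⟨0, hn⟩ : Fin n).succ)) = 0 := by
      simp [Function.comp]
    rw [Finset.prod_eq_zero (Finset.mem_univ (⟨0, hn⟩ : Fin n)) hzero, zero_mul]
  -- M has at least two monomials
  have htwo : ∃ i1 ∈ M.support, i1 ≠ i0 := by
    by_contra hcon
    push_neg at hcon
    have hsub : M.support = {i0} :=
      Finset.Subset.antisymm (fun x hx => Finset.mem_singleton.mpr (hcon x hx))
        (Finset.singleton_subset_iff.mpr hi0)
    have hM1 : M = MvPolynomial.monomial i0 (M.coeff i0) := by
      conv_lhs => rw [← MvPolynomial.support_sum_monomial_coeff M]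
      rw [hsub, Finset.sum_singleton]
    have : MvPolynomial.eval (γ ∘ Fin.succ) M ≠ 0 := by
      rw [hM1, MvPolynomial.eval_monomial]
      refine mul_ne_zero hi0c ?_
      refine Finset.prod_ne_zero_iff.mpr fun l _ => ?_
      exact pow_ne_zero _ (hγ l.succ)
    exact this heval
  obtain ⟨i1, hi1, hi1ne⟩ := htwo
  have hi1c : M.coeff i1 ≠ 0 := MvPolynomial.mem_support_iff.mp hi1
  -- conclusions
  refine ⟨⟨1, one_ne_zero, ?_⟩, ?_, ?_⟩
  · rw [hinit, hMdef, map_one, one_mul, hB'def, hq'def]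
  · rw [hinit, heval]
  · refine ⟨i0, MvPolynomial.mem_support_iff.mpr (hMne i0 hi0c).1,
      i1, MvPolynomial.mem_support_iff.mpr (hMne i1 hi1c).1, ?_, ?_, ?_⟩
    · exact fun h => hi1ne h.symm
    · rw [(hMne i0 hi0c).2.1, htrop]
    · rw [(hMne i1 hi1c).2.1, htrop]
end
end

section
/- There exists a point (x̃, ỹ) ∈ (K*)² with f̃(x̃, ỹ) = 0 for f̃ = −3t² + 3tx − t²y + txy − t³xy⁴ + (t⁴+t⁵)y⁴ + x⁵, such that o(x̃) = 1, pc(x̃) = 1, o(ỹ) = 0, and pc(ỹ) = −3. -/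
noncomputable section

/-- The series `t ∈ K`. -/
def tt : K := HahnSeries.single (1 : ℚ) (1 : ℂ)

open MvPolynomial in
/-- The polynomial `f̃ = −3t² + 3tx − t²y + txy − t³xy⁴ + (t⁴+t⁵)y⁴ + x⁵`. -/
def fEx : MvPolynomial (Fin 2) K :=
  C (-3 * tt ^ 2) + C (3 * tt) * X 0 + C (-tt ^ 2) * X 1 +
    C tt * X 0 * X 1 + C (-tt ^ 3) * X 0 * X 1 ^ 4 +
    C (tt ^ 4 + tt ^ 5) * X 1 ^ 4 + X 0 ^ 5

open HahnSeries in
lemma aux_helpers : True := trivial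

open HahnSeries

lemma tt_ne : tt ≠ 0 := single_ne_zero one_ne_zero

lemma tt_orderTop : tt.orderTop = 1 := orderTop_single one_ne_zero

lemma u_orderTop : (1 + tt : K).orderTop = 0 := by
  rw [orderTop_add_eq_left, orderTop_one]
  rw [orderTop_one, tt_orderTop]; exact_mod_cast zero_lt_one

lemma u_lc : (1 + tt : K).leadingCoeff = 1 := by
  rw [leadingCoeff_add_eq_left, leadingCoeff_one]
  rw [orderTop_one, tt_orderTop]; exact_mod_cast zero_lt_one

lemma u_ne : (1 + tt : K) ≠ 0 := leadingCoeff_ne_zero.mp (by rw [u_lc]; exact one_ne_zero)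

lemma u_order : (1 + tt : K).order = 0 := by
  have := order_eq_orderTop_of_ne_zero u_ne
  rw [u_orderTop] at this; exact_mod_cast this

lemma single_neg3 : (HahnSeries.single (0:ℚ) (-3:ℂ)) = (-3 : K) := by
  rw [← HahnSeries.C_apply, map_neg, map_ofNat]

def xEx : K := tt * (1 + tt)
def yEx : K := HahnSeries.single (0:ℚ) (-3:ℂ) - tt ^ 2 * (1 + tt) ^ 5

lemma xEx_ne : xEx ≠ 0 := mul_ne_zero tt_ne u_ne

lemma xEx_order : xEx.order = 1 := by
  rw [xEx, order_mul tt_ne u_ne, u_order, tt, order_single one_ne_zero, add_zero]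

lemma xEx_pc : pc xEx = 1 := by
  show xEx.coeff xEx.order = 1
  rw [show xEx.order = tt.order + (1 + tt : K).order by
        rw [xEx_order, u_order, tt, order_single one_ne_zero, add_zero],
    xEx, coeff_mul_order_add_order, u_lc, mul_one, tt, leadingCoeff_of_single]

lemma v_ne : (tt ^ 2 * (1 + tt) ^ 5 : K) ≠ 0 :=
  mul_ne_zero (pow_ne_zero _ tt_ne) (pow_ne_zero _ u_ne)

lemma v_order : (tt ^ 2 * (1 + tt) ^ 5 : K).order = 2 := by
  rw [order_mul (pow_ne_zero _ tt_ne) (pow_ne_zero _ u_ne), order_pow, order_pow,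
    u_order, tt, order_single one_ne_zero]
  simp [nsmul_eq_mul]

lemma v_orderTop : (tt ^ 2 * (1 + tt) ^ 5 : K).orderTop = 2 := by
  rw [← order_eq_orderTop_of_ne_zero v_ne, v_order]
  norm_cast

lemma hlt : (HahnSeries.single (0:ℚ) (-3:ℂ)).orderTop
    < (-(tt ^ 2 * (1 + tt) ^ 5) : K).orderTop := by
  rw [orderTop_neg, v_orderTop, orderTop_single (by norm_num : (-3:ℂ) ≠ 0)]
  norm_num

lemma yEx_lc : yEx.leadingCoeff = -3 := by
  rw [yEx, sub_eq_add_neg, leadingCoeff_add_eq_left hlt, leadingCoeff_of_single]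

lemma yEx_ne : yEx ≠ 0 := leadingCoeff_ne_zero.mp (by rw [yEx_lc]; norm_num)

lemma yEx_order : yEx.order = 0 := by
  have h : yEx.orderTop = ((0:ℚ) : WithTop ℚ) := by
    rw [yEx, sub_eq_add_neg, orderTop_add_eq_left hlt,
      orderTop_single (by norm_num : (-3:ℂ) ≠ 0)]
  have := order_eq_orderTop_of_ne_zero yEx_ne
  rw [h] at this
  exact_mod_cast this

lemma yEx_pc : pc yEx = -3 := by rw [pc, ← leadingCoeff_eq, yEx_lc]

lemma eval_zero : MvPolynomial.eval ![xEx, yEx] fEx = 0 := by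
  simp only [fEx, MvPolynomial.eval_add, MvPolynomial.eval_mul, MvPolynomial.eval_pow,
    MvPolynomial.eval_C, MvPolynomial.eval_X, Matrix.cons_val_zero, Matrix.cons_val_one,
    Matrix.head_cons]
  rw [xEx, yEx, single_neg3]
  ring

/-- There is a root `(x̃, ỹ) ∈ (K*)²` of
`f̃ = −3t² + 3tx − t²y + txy − t³xy⁴ + (t⁴+t⁵)y⁴ + x⁵` with `o(x̃) = 1`,
`pc(x̃) = 1`, `o(ỹ) = 0` and `pc(ỹ) = −3`. -/
theorem example_root_exists :
    ∃ x y : K, x ≠ 0 ∧ y ≠ 0 ∧ MvPolynomial.eval ![x, y] fEx = 0 ∧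
      x.order = 1 ∧ pc x = 1 ∧ y.order = 0 ∧ pc y = -3 := by
  exact ⟨xEx, yEx, xEx_ne, yEx_ne, eval_zero, xEx_order, xEx_pc, yEx_order, yEx_pc⟩
end
end

section
/- Let f̃ ∈ K[x₁,…,x_n] and b̃ ∈ (K*)ⁿ with b_j = o(b̃_j), γ_j = pc(b̃_j), and b = (b₁,…,b_n). If f̃_b(γ₁,…,γ_n) ≠ 0, then o(f̃(b̃)) = f(b) and pc(f̃(b̃)) = f̃_b(γ₁,…,γ_n); in particular f̃(b̃) ≠ 0. -/
noncomputable section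

lemma sum_coeff' {ι : Type*} (s : Finset ι) (g : ι → K) (q : ℚ) :
    (∑ i ∈ s, g i).coeff q = ∑ i ∈ s, (g i).coeff q := by
  classical
  induction s using Finset.cons_induction with
  | empty => simp
  | cons a s ha ih =>
    rw [Finset.sum_cons, Finset.sum_cons, HahnSeries.coeff_add, ih]

lemma pc_mul {a b : K} (ha : a ≠ 0) (hb : b ≠ 0) : pc (a * b) = pc a * pc b := by
  unfold pc
  rw [HahnSeries.order_mul ha hb, HahnSeries.coeff_mul_order_add_order,
    HahnSeries.leadingCoeff_eq, HahnSeries.leadingCoeff_eq]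

lemma pc_pow {a : K} (ha : a ≠ 0) (k : ℕ) : pc (a ^ k) = (pc a) ^ k := by
  induction k with
  | zero => simp [pc]
  | succ k ih =>
    rw [pow_succ, pc_mul (pow_ne_zero _ ha) ha, ih, pow_succ]

lemma prod_facts {ι : Type*} (s : Finset ι) (g : ι → K) (hg : ∀ i ∈ s, g i ≠ 0) :
    (∏ i ∈ s, g i) ≠ 0 ∧ (∏ i ∈ s, g i).order = ∑ i ∈ s, (g i).order ∧
      pc (∏ i ∈ s, g i) = ∏ i ∈ s, pc (g i) := by
  classical
  induction s using Finset.cons_induction with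
  | empty => simp [pc]
  | cons a s ha ih =>
    obtain ⟨h0, hord, hpc⟩ := ih (fun i hi => hg i (Finset.mem_cons_of_mem hi))
    have hga : g a ≠ 0 := hg a (Finset.mem_cons_self a s)
    rw [Finset.prod_cons, Finset.sum_cons, Finset.prod_cons]
    refine ⟨mul_ne_zero hga h0, ?_, ?_⟩
    · rw [HahnSeries.order_mul hga h0, hord]
    · rw [pc_mul hga h0, hpc]

/-- If the initial form of `f` at the vector of orders `b` of `x ∈ (K*)ⁿ` does
not vanish at the vector of principal coefficients `γ`, then
`o(f(x)) = f(b)` and `pc(f(x)) = f̃_b(γ)`; in particular `f(x) ≠ 0`. -/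
theorem order_and_pc_of_eval (n : ℕ) (f : MvPolynomial (Fin n) K)
    (x : Fin n → K) (hx : ∀ j, x j ≠ 0)
    (h : MvPolynomial.eval (fun j => pc (x j))
        (initForm f fun j => (x j).order) ≠ 0) :
    (MvPolynomial.eval x f).orderTop = trop f (fun j => (x j).order) ∧
      MvPolynomial.eval x f ≠ 0 ∧
      pc (MvPolynomial.eval x f) =
        MvPolynomial.eval (fun j => pc (x j))
          (initForm f fun j => (x j).order) := by
  classical
  set b : Fin n → ℚ := fun j => (x j).order with hb
  set γ : Fin n → ℂ := fun j => pc (x j) with hγ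
  set g : (Fin n →₀ ℕ) → K := fun i => f.coeff i * ∏ j, x j ^ i j with hgdef
  -- facts about terms
  have hterm : ∀ i ∈ f.support, g i ≠ 0 ∧ (g i).order = wt f b i ∧
      pc (g i) = pc (f.coeff i) * ∏ j, (γ j) ^ (i j) := by
    intro i hi
    have hci : f.coeff i ≠ 0 := MvPolynomial.mem_support_iff.mp hi
    obtain ⟨h0, hord, hpc⟩ := prod_facts Finset.univ (fun j => x j ^ i j)
      (fun j _ => pow_ne_zero _ (hx j))
    refine ⟨mul_ne_zero hci h0, ?_, ?_⟩
    · rw [HahnSeries.order_mul hci h0, hord, wt]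
      congr 1
      refine Finset.sum_congr rfl fun j _ => ?_
      rw [HahnSeries.order_pow, nsmul_eq_mul]
    · rw [pc_mul hci h0, hpc]
      congr 1
      exact Finset.prod_congr rfl fun j _ => pc_pow (hx j) (i j)
  -- support is nonempty
  have hS : (f.support.filter fun i => (wt f b i : WithTop ℚ) = trop f b).Nonempty := by
    by_contra hne
    rw [Finset.not_nonempty_iff_eq_empty] at hne
    apply h
    rw [initForm, hne, Finset.sum_empty, map_zero]
  have hne : f.support.Nonempty := by
    obtain ⟨i, hi⟩ := hS
    exact ⟨i, (Finset.mem_filter.mp hi).1⟩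
  set m : ℚ := f.support.inf' hne (wt f b) with hm
  have htrop : trop f b = (m : WithTop ℚ) := by
    rw [trop, hm, Finset.coe_inf' hne]
    rfl
  have hle : ∀ i ∈ f.support, m ≤ wt f b i := fun i hi => Finset.inf'_le _ hi
  have hfilter : ∀ i ∈ f.support,
      ((wt f b i : WithTop ℚ) = trop f b ↔ wt f b i = m) := by
    intro i hi
    rw [htrop, WithTop.coe_eq_coe]
  -- eval as a sum of terms
  have heval : MvPolynomial.eval x f = ∑ i ∈ f.support, g i :=
    MvPolynomial.eval_eq' x f
  -- coefficients of eval
  have hcoeff_lt : ∀ q : ℚ, q < m → (MvPolynomial.eval x f).coeff q = 0 := by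
    intro q hq
    rw [heval, sum_coeff']
    refine Finset.sum_eq_zero fun i hi => ?_
    obtain ⟨h0, hord, _⟩ := hterm i hi
    exact HahnSeries.coeff_eq_zero_of_lt_order (hord ▸ lt_of_lt_of_le hq (hle i hi))
  have hIF : MvPolynomial.eval γ (initForm f b) =
      ∑ i ∈ f.support.filter fun i => (wt f b i : WithTop ℚ) = trop f b,
        pc (f.coeff i) * ∏ j, (γ j) ^ (i j) := by
    rw [initForm, map_sum]
    refine Finset.sum_congr rfl fun i _ => ?_
    rw [MvPolynomial.eval_monomial, Finsupp.prod_pow]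
  have hcoeff_m : (MvPolynomial.eval x f).coeff m = MvPolynomial.eval γ (initForm f b) := by
    rw [heval, sum_coeff', hIF, ← Finset.sum_filter_add_sum_filter_not f.support
      (fun i => (wt f b i : WithTop ℚ) = trop f b) (fun i => (g i).coeff m)]
    have h2 : ∀ i ∈ f.support.filter fun i => ¬ (wt f b i : WithTop ℚ) = trop f b,
        (g i).coeff m = 0 := by
      intro i hi
      obtain ⟨hi1, hi2⟩ := Finset.mem_filter.mp hi
      obtain ⟨h0, hord, _⟩ := hterm i hi1
      have : m < wt f b i :=
        lt_of_le_of_ne (hle i hi1) (fun e => hi2 ((hfilter i hi1).mpr e.symm))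
      exact HahnSeries.coeff_eq_zero_of_lt_order (hord ▸ this)
    rw [Finset.sum_eq_zero h2, add_zero]
    refine Finset.sum_congr rfl fun i hi => ?_
    obtain ⟨hi1, hi2⟩ := Finset.mem_filter.mp hi
    obtain ⟨h0, hord, hpc⟩ := hterm i hi1
    have : wt f b i = m := (hfilter i hi1).mp hi2
    rw [← hpc, ← this, ← hord]
    rfl
  have hnz : (MvPolynomial.eval x f).coeff m ≠ 0 := by rw [hcoeff_m]; exact h
  have hne0 : MvPolynomial.eval x f ≠ 0 := HahnSeries.ne_zero_of_coeff_ne_zero hnz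
  have hord : (MvPolynomial.eval x f).order = m := by
    refine le_antisymm (HahnSeries.order_le_of_coeff_ne_zero hnz) ?_
    by_contra hlt
    push_neg at hlt
    exact (HahnSeries.leadingCoeff_ne_zero.mpr hne0) (by rw [HahnSeries.leadingCoeff_eq]; exact hcoeff_lt _ hlt)
  refine ⟨?_, hne0, ?_⟩
  · rw [← HahnSeries.order_eq_orderTop_of_ne_zero hne0, hord, htrop]
  · rw [pc, hord, hcoeff_m]

end
end
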